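/- arXiv:1803.05326 — 2 statements merged into one kernel-verified Lean document; each statement's English description precedes it below -/
import Mathlib

section
/- Let A be a separable C*-algebra and D a maximal abelian C*-subalgebra of A containing an approximate unit for A. Then D is a weakly Cartan subalgebra of A: the relative commutant D' equals D, for each character φ of D the ideal J_φ equals ker(φ) and the quotient D/ker(φ) is unital (isomorphic to ℂ), and for each character φ of D there exist d ∈ D and an open neighbourhood U of φ in D̂ such that ψ(d) = 1 for all ψ ∈ U. -/
open WeakDual Filter Topology

universe u

/-- `D` contains an approximate unit for `A`: a net `(e_i)` in `D` with
`e_i a → a` and `a e_i → a` for all `a ∈ A`. -/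
def HasApproxUnit {A : Type u} [NonUnitalCStarAlgebra A]
    (D : NonUnitalStarSubalgebra ℂ A) : Prop :=
  ∃ (ι : Type u) (l : Filter ι) (e : ι → A), l.NeBot ∧ (∀ i, e i ∈ D) ∧
    ∀ a : A, Tendsto (fun i => e i * a) l (𝓝 a) ∧ Tendsto (fun i => a * e i) l (𝓝 a)

/-- `n` is a normaliser of `D` in `A`: `nDn* ⊆ D` and `n*Dn ⊆ D`. -/
def IsNormalizer {A : Type u} [NonUnitalCStarAlgebra A]
    (D : NonUnitalStarSubalgebra ℂ A) (n : A) : Prop :=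
  ∀ d ∈ D, n * d * star n ∈ D ∧ star n * d * n ∈ D

/-- `supp°(d) = {φ ∈ D̂ : φ(d) ≠ 0}`, an open subset of the character space of `D`. -/
def suppo {A : Type u} [NonUnitalCStarAlgebra A] (D : NonUnitalStarSubalgebra ℂ A)
    (d : D) : Set ↥(characterSpace ℂ D) :=
  {φ | φ.1 d ≠ 0}

/-- `e` is the partial homeomorphism `α_n : supp°(n*n) → supp°(nn*)` of the character
space of `D` determined by `φ(n*n)·(α_n φ)(d) = φ(n*dn)` for `φ ∈ supp°(n*n)`, `d ∈ D`. -/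
def IsAlphaFor {A : Type u} [NonUnitalCStarAlgebra A] (D : NonUnitalStarSubalgebra ℂ A)
    (n : A) (e : PartialHomeomorph ↥(characterSpace ℂ D) ↥(characterSpace ℂ D)) : Prop :=
  ∀ (h1 : star n * n ∈ D) (h2 : n * star n ∈ D),
    e.source = suppo D ⟨star n * n, h1⟩ ∧ e.target = suppo D ⟨n * star n, h2⟩ ∧
    ∀ φ ∈ e.source, ∀ (d : D) (hd : star n * (d : A) * n ∈ D),
      φ.1 ⟨star n * n, h1⟩ * (e φ).1 d = φ.1 ⟨star n * (d : A) * n, hd⟩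

/-- The relative commutant `D' = {a ∈ A : ad = da for all d ∈ D}` of `D` in `A`. -/
def commutantSet {A : Type u} [NonUnitalCStarAlgebra A]
    (D : NonUnitalStarSubalgebra ℂ A) : Set A :=
  {a : A | ∀ d ∈ D, a * d = d * a}

/-- The ideal `J_φ = ker(φ)·D'` of `D'`: the closed linear span of products `d·a`
with `d ∈ D`, `φ(d) = 0` and `a ∈ D'`. -/
def Jphi {A : Type u} [NonUnitalCStarAlgebra A] (D : NonUnitalStarSubalgebra ℂ A)
    (φ : ↥(characterSpace ℂ D)) : Set A :=
  closure ((Submodule.span ℂ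
    {x : A | ∃ d : D, φ.1 d = 0 ∧ ∃ a ∈ commutantSet D, x = (d : A) * a} : Submodule ℂ A) : Set A)

/-- `e` represents the unit of the quotient `D'/J`. -/
def IsUnitMod {A : Type u} [NonUnitalCStarAlgebra A] (D : NonUnitalStarSubalgebra ℂ A)
    (e : A) (J : Set A) : Prop :=
  ∀ a ∈ commutantSet D, a * e - a ∈ J ∧ e * a - a ∈ J

/-- `D` is a weakly Cartan subalgebra of `A`: it is abelian, contains an approximate
unit for `A`, each quotient `D'/J_φ` is unital, and units can be represented locally
uniformly by elements of `D`. -/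
def IsWeaklyCartan {A : Type u} [NonUnitalCStarAlgebra A]
    (D : NonUnitalStarSubalgebra ℂ A) : Prop :=
  (∀ a ∈ D, ∀ b ∈ D, a * b = b * a) ∧
  HasApproxUnit D ∧
  (∀ φ : ↥(characterSpace ℂ D), ∃ e ∈ commutantSet D, IsUnitMod D e (Jphi D φ)) ∧
  (∀ φ : ↥(characterSpace ℂ D), ∃ d : D, ∃ U : Set ↥(characterSpace ℂ D),
    IsOpen U ∧ φ ∈ U ∧ ∀ ψ ∈ U, IsUnitMod D (d : A) (Jphi D ψ))


section AuxLemmas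

variable {A : Type u} [NonUnitalCStarAlgebra A] {D : NonUnitalStarSubalgebra ℂ A}

lemma mem_commutantSet_of_mem (hab : ∀ a ∈ D, ∀ b ∈ D, a * b = b * a) {a : A} (ha : a ∈ D) :
    a ∈ commutantSet D := fun d hd => hab a ha d hd

lemma commutantSet_star_mem {a : A} (h : a ∈ commutantSet D) : star a ∈ commutantSet D := by
  intro d hd
  have h1 : a * star d = star d * a := h (star d) (star_mem hd)
  have := congrArg star h1
  simpa [star_mul] using this.symm

lemma commutantSet_add_mem {a b : A} (ha : a ∈ commutantSet D) (hb : b ∈ commutantSet D) :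
    a + b ∈ commutantSet D := fun d hd => by
  rw [add_mul, mul_add, ha d hd, hb d hd]

lemma commutantSet_sub_mem {a b : A} (ha : a ∈ commutantSet D) (hb : b ∈ commutantSet D) :
    a - b ∈ commutantSet D := fun d hd => by
  rw [sub_mul, mul_sub, ha d hd, hb d hd]

lemma commutantSet_smul_mem {R : Type*} [SMul R A] [SMulCommClass R A A]
    [IsScalarTower R A A] (c : R) {a : A} (ha : a ∈ commutantSet D) :
    c • a ∈ commutantSet D := fun d hd => by
  rw [smul_mul_assoc, mul_smul_comm, ha d hd]

lemma commutant_eq (hab : ∀ a ∈ D, ∀ b ∈ D, a * b = b * a)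
    (hmax : ∀ E : NonUnitalStarSubalgebra ℂ A, IsClosed (E : Set A) →
      (∀ a ∈ E, ∀ b ∈ E, a * b = b * a) → D ≤ E → D = E) :
    commutantSet D = (D : Set A) := by
  apply Set.Subset.antisymm ?_ (fun a ha => mem_commutantSet_of_mem hab ha)
  have key : ∀ y : A, y ∈ commutantSet D → IsSelfAdjoint y → y ∈ D := by
    intro y hy hysa
    set s : Set A := (D : Set A) ∪ {y} with hs
    have hstar : ∀ u ∈ s, star u ∈ s := by
      rintro u (hu | hu)
      · exact Or.inl (star_mem hu)
      · simp only [Set.mem_singleton_iff] at hu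
        subst hu
        exact Or.inr (by simp [hysa.star_eq])
    have hgen : ∀ u ∈ s, ∀ v ∈ s, u * v = v * u := by
      rintro u (hu | hu) v (hv | hv)
      · exact hab u hu v hv
      · simp only [Set.mem_singleton_iff] at hv; subst hv; exact (hy u hu).symm
      · simp only [Set.mem_singleton_iff] at hu; subst hu; exact hy v hv
      · simp only [Set.mem_singleton_iff] at hu hv; subst hu; subst hv; rfl
    set S := NonUnitalStarAlgebra.adjoin ℂ s with hS
    have claim1 : ∀ v ∈ S, ∀ u ∈ s, u * v = v * u := by
      intro v hv
      induction hv using NonUnitalStarAlgebra.adjoin_induction with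
      | mem x hx => exact fun u hu => hgen u hu x hx
      | add x y hx hy ihx ihy => intro u hu; rw [mul_add, add_mul, ihx u hu, ihy u hu]
      | zero => simp
      | mul x y hx hy ihx ihy =>
          intro u hu
          rw [← mul_assoc, ihx u hu, mul_assoc, ihy u hu, mul_assoc]
      | smul c x hx ihx => intro u hu; rw [mul_smul_comm, smul_mul_assoc, ihx u hu]
      | star x hx ihx =>
          intro u hu
          have h1 : star u * x = x * star u := ihx (star u) (hstar u hu)
          have := congrArg star h1
          simpa [star_mul] using this.symm
    have claim2 : ∀ u ∈ S, ∀ v ∈ S, u * v = v * u := by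
      intro u hu
      induction hu using NonUnitalStarAlgebra.adjoin_induction with
      | mem x hx => exact fun v hv => claim1 v hv x hx
      | add x y hx hy ihx ihy => intro v hv; rw [add_mul, mul_add, ihx v hv, ihy v hv]
      | zero => simp
      | mul x y hx hy ihx ihy =>
          intro v hv
          rw [mul_assoc, ihy v hv, ← mul_assoc, ihx v hv, mul_assoc]
      | smul c x hx ihx => intro v hv; rw [smul_mul_assoc, mul_smul_comm, ihx v hv]
      | star x hx ihx =>
          intro v hv
          have h1 : x * star v = star v * x := ihx (star v) (star_mem hv)
          have := congrArg star h1
          simpa [star_mul] using this.symm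
    set E := S.topologicalClosure with hE
    have hstep1 : ∀ u ∈ S, ∀ v ∈ E, u * v = v * u := by
      intro u hu v hv
      have hcl : (E : Set A) ⊆ {v | u * v = v * u} := by
        apply closure_minimal _ (isClosed_eq (by fun_prop) (by fun_prop))
        intro v hv
        exact claim2 u hu v hv
      exact hcl hv
    have hstep2 : ∀ u ∈ E, ∀ v ∈ E, u * v = v * u := by
      intro u hu v hv
      have hcl : (E : Set A) ⊆ {u | u * v = v * u} := by
        apply closure_minimal _ (isClosed_eq (by fun_prop) (by fun_prop))
        intro u hu
        exact hstep1 u hu v hv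
      exact hcl hu
    have hDE : D ≤ E := by
      refine le_trans ?_ S.le_topologicalClosure
      intro d hd
      exact NonUnitalStarAlgebra.subset_adjoin ℂ s (Or.inl hd)
    have hmem : y ∈ E :=
      S.le_topologicalClosure (NonUnitalStarAlgebra.subset_adjoin ℂ s (Or.inr rfl))
    have := hmax E S.isClosed_topologicalClosure
      (fun a ha b hb => hstep2 a ha b hb) hDE
    rw [this]
    exact hmem
  intro a ha
  have hre : (realPart a : A) ∈ D := by
    apply key _ ?_ (realPart a).2
    rw [realPart_apply_coe]
    exact commutantSet_smul_mem _ (commutantSet_add_mem ha (commutantSet_star_mem ha))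
  have him : (imaginaryPart a : A) ∈ D := by
    apply key _ ?_ (imaginaryPart a).2
    have h1 : (Complex.I • (imaginaryPart a : A)) = a - realPart a := by
      rw [eq_sub_iff_add_eq, add_comm]
      exact realPart_add_I_smul_imaginaryPart a
    have h2 : (imaginaryPart a : A) = (-Complex.I) • (a - (realPart a : A)) := by
      rw [← h1, smul_smul]
      simp [Complex.I_mul_I]
    rw [h2]
    exact commutantSet_smul_mem _
      (commutantSet_sub_mem ha (mem_commutantSet_of_mem hab hre))
  have := realPart_add_I_smul_imaginaryPart a
  rw [← this]
  exact add_mem hre (SMulMemClass.smul_mem _ him)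

lemma char_star' {B : Type v} [NonUnitalCStarAlgebra B] (φ : characterSpace ℂ B) (b : B) :
    φ (star b) = star (φ b) := by
  let ψ : Unitization ℂ B →ₐ[ℂ] ℂ :=
    Unitization.lift (WeakDual.CharacterSpace.toNonUnitalAlgHom φ)
  letI : StarHomClass (Unitization ℂ B →ₐ[ℂ] ℂ) (Unitization ℂ B) ℂ :=
    AlgHomClass.instStarHomClass
  have h := map_star ψ ((b : Unitization ℂ B))
  rw [← Unitization.inr_star] at h
  simpa [ψ, Unitization.lift_apply, NonUnitalAlgHom.toAlgHom_apply] using h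

lemma char_exists_one (φ : characterSpace ℂ ↥D) : ∃ e : ↥D, φ e = 1 := by
  have h : (φ : WeakDual ℂ ↥D) ≠ 0 := φ.2.1
  have : ∃ b : ↥D, φ b ≠ 0 := by
    by_contra hc
    push_neg at hc
    exact h (ContinuousLinearMap.ext fun b => by exact hc b)
  obtain ⟨b, hb⟩ := this
  refine ⟨(φ b)⁻¹ • b, ?_⟩
  rw [map_smul, smul_eq_mul, inv_mul_cancel₀ hb]

lemma exists_local_one (hDc : IsClosed (D : Set A)) (φ : characterSpace ℂ ↥D) :
    ∃ d : ↥D, ∃ U : Set (characterSpace ℂ ↥D), IsOpen U ∧ φ ∈ U ∧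
      ∀ ψ ∈ U, (ψ : WeakDual ℂ ↥D) d = 1 := by
  haveI : IsClosed (D : Set A) := hDc
  obtain ⟨e, he⟩ := char_exists_one φ
  set x : ↥D := star e * e with hxdef
  have hx : IsSelfAdjoint x := IsSelfAdjoint.star_mul_self e
  have hφx : φ x = 1 := by
    rw [hxdef, map_mul, char_star' φ e, he]
    simp
  set f : ℝ → ℝ := fun t => min (2 * t) 1 with hfdef
  set g : ℝ → ℝ := fun t => t - min t 2⁻¹ with hgdef
  have hfc : Continuous f := by fun_prop
  have hgc : Continuous g := by fun_prop
  have hf0 : f 0 = 0 := by simp [hfdef]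
  have hg0 : g 0 = 0 := by simp [hgdef]
  set d : ↥D := cfcₙ f x with hddef
  set b : ↥D := cfcₙ g x with hbdef
  have hmul : d * b = b := by
    rw [hddef, hbdef, ← cfcₙ_mul f g x]
    apply cfcₙ_congr
    intro t _
    rcases le_or_gt t 2⁻¹ with h | h
    · simp only [min_eq_left h, hgdef, hfdef]
      simp
    · have h1 : f t = 1 := by
        rw [hfdef]
        simp only [min_eq_right]
        rw [min_eq_right]
        linarith
      simp [h1]
  let Φ : ↥D →⋆ₙₐ[ℂ] ℂ :=
    { WeakDual.CharacterSpace.toNonUnitalAlgHom φ with map_star' := char_star' φ }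
  have hΦeq : ∀ z : ↥D, Φ z = φ z := fun _ => rfl
  have hΦc : Continuous Φ := map_continuous φ
  have hΦx : IsSelfAdjoint (Φ x) := by rw [hΦeq, hφx]; exact .one ℂ
  have hφb : φ b = (2⁻¹ : ℂ) := by
    have hmap : Φ (cfcₙ g x) = cfcₙ g (Φ x) :=
      NonUnitalStarAlgHomClass.map_cfcₙ Φ g x (hgc.continuousOn) hg0 hΦc hx hΦx
    rw [hbdef, ← hΦeq, hmap, hΦeq, hφx]
    have h1 : (1 : ℂ) = algebraMap ℝ ℂ 1 := by simp
    rw [cfcₙ_eq_cfc (hf0 := hg0), h1, cfc_algebraMap (1 : ℝ) g]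
    norm_num [hgdef]
  refine ⟨d, {ψ : characterSpace ℂ ↥D | (ψ : WeakDual ℂ ↥D) b ≠ 0}, ?_, ?_, ?_⟩
  · have hcont : Continuous fun ψ : characterSpace ℂ ↥D => (ψ : WeakDual ℂ ↥D) b :=
      (WeakDual.eval_continuous b).comp continuous_subtype_val
    exact isOpen_compl_singleton.preimage hcont
  · show (φ : WeakDual ℂ ↥D) b ≠ 0
    have : (φ : WeakDual ℂ ↥D) b = φ b := rfl
    rw [this, hφb]
    norm_num
  · intro ψ hψ
    show ψ d = 1
    have hb : ψ b ≠ 0 := hψ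
    have h2 : ψ d * ψ b = ψ b := by rw [← map_mul]; exact congrArg ψ hmul
    exact mul_right_cancel₀ hb (by rw [h2, one_mul])

lemma jphi_eq (hDc : IsClosed (D : Set A)) (hab : ∀ a ∈ D, ∀ b ∈ D, a * b = b * a)
    (hcomm : commutantSet D = (D : Set A)) (hau : HasApproxUnit D)
    (φ : characterSpace ℂ ↥D) :
    Jphi D φ = (fun d : ↥D => (d : A)) '' {d : ↥D | φ.1 d = 0} := by
  set K : Set A := (fun d : ↥D => (d : A)) '' {d : ↥D | φ.1 d = 0} with hK
  apply Set.Subset.antisymm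
  · have hker : IsClosed {d : ↥D | φ.1 d = 0} := by
      have : {d : ↥D | φ.1 d = 0} = (fun d : ↥D => φ d) ⁻¹' {0} := rfl
      rw [this]
      exact isClosed_singleton.preimage (map_continuous φ)
    have hKc : IsClosed K :=
      hDc.isClosedEmbedding_subtypeVal.isClosedMap _ hker
    have hgen : {x : A | ∃ d : ↥D, φ.1 d = 0 ∧ ∃ a ∈ commutantSet D, x = (d : A) * a} ⊆ K := by
      rintro x ⟨d, hd0, a, ha, rfl⟩
      rw [hcomm] at ha
      refine ⟨d * ⟨a, ha⟩, ?_, rfl⟩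
      show φ (d * ⟨a, ha⟩) = 0
      rw [map_mul]
      have : φ d = 0 := hd0
      rw [this, zero_mul]
    have hsub : ∀ x ∈ (Submodule.span ℂ
        {x : A | ∃ d : ↥D, φ.1 d = 0 ∧ ∃ a ∈ commutantSet D, x = (d : A) * a} :
          Submodule ℂ A), x ∈ K := by
      intro x hx
      induction hx using Submodule.span_induction with
      | mem x hx => exact hgen hx
      | zero => exact ⟨0, map_zero _, by simp⟩
      | add x y hx hy ihx ihy =>
          obtain ⟨dx, hdx, rfl⟩ := ihx
          obtain ⟨dy, hdy, rfl⟩ := ihy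
          refine ⟨dx + dy, ?_, by push_cast; rfl⟩
          show φ (dx + dy) = 0
          have hdx' : φ dx = 0 := hdx
          have hdy' : φ dy = 0 := hdy
          rw [map_add, hdx', hdy', add_zero]
      | smul c x hx ihx =>
          obtain ⟨dx, hdx, rfl⟩ := ihx
          refine ⟨c • dx, ?_, by push_cast; rfl⟩
          show φ (c • dx) = 0
          have hdx' : φ dx = 0 := hdx
          rw [map_smul, hdx', smul_zero]
    exact closure_minimal hsub hKc
  · rintro x ⟨d, hd0, rfl⟩
    obtain ⟨ι, l, e, hl, heD, hconv⟩ := hau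
    haveI := hl
    apply mem_closure_of_tendsto (hconv (d : A)).2
    filter_upwards with i
    apply Submodule.subset_span
    exact ⟨d, hd0, e i, mem_commutantSet_of_mem hab (heD i), rfl⟩

lemma isUnitMod_of_char_one (hcomm : commutantSet D = (D : Set A))
    (ψ : characterSpace ℂ ↥D)
    (hJ : Jphi D ψ = (fun d : ↥D => (d : A)) '' {d : ↥D | ψ.1 d = 0})
    (d : ↥D) (hd : ψ.1 d = 1) : IsUnitMod D (d : A) (Jphi D ψ) := by
  intro a ha
  rw [hcomm] at ha
  have hd' : ψ d = 1 := hd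
  constructor
  · rw [hJ]
    refine ⟨⟨a, ha⟩ * d - ⟨a, ha⟩, ?_, by push_cast; rfl⟩
    show ψ (⟨a, ha⟩ * d - ⟨a, ha⟩) = 0
    rw [map_sub, map_mul, hd', mul_one, sub_self]
  · rw [hJ]
    refine ⟨d * ⟨a, ha⟩ - ⟨a, ha⟩, ?_, by push_cast; rfl⟩
    show ψ (d * ⟨a, ha⟩ - ⟨a, ha⟩) = 0
    rw [map_sub, map_mul, hd', one_mul, sub_self]

end AuxLemmas

theorem stmt16 {A : Type u} [NonUnitalCStarAlgebra A] [TopologicalSpace.SeparableSpace A]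
    (D : NonUnitalStarSubalgebra ℂ A) (hDc : IsClosed (D : Set A))
    (hab : ∀ a ∈ D, ∀ b ∈ D, a * b = b * a)
    -- D is maximal abelian
    (hmax : ∀ E : NonUnitalStarSubalgebra ℂ A, IsClosed (E : Set A) →
      (∀ a ∈ E, ∀ b ∈ E, a * b = b * a) → D ≤ E → D = E)
    (hau : HasApproxUnit D) :
    -- D is weakly Cartan
    IsWeaklyCartan D ∧
    -- the relative commutant D' equals D
    commutantSet D = (D : Set A) ∧
    -- for each character φ, J_φ = ker φ
    (∀ φ : ↥(characterSpace ℂ D), Jphi D φ = (fun d : D => (d : A)) '' {d : D | φ.1 d = 0}) ∧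
    -- the quotient D'/J_φ is unital and isomorphic to ℂ
    (∀ φ : ↥(characterSpace ℂ D), ∃ e ∈ commutantSet D, IsUnitMod D e (Jphi D φ) ∧
      ∀ a ∈ commutantSet D, ∃ c : ℂ, a - c • e ∈ Jphi D φ) ∧
    -- units can be chosen locally constantly from D
    (∀ φ : ↥(characterSpace ℂ D), ∃ d : D, ∃ U : Set ↥(characterSpace ℂ D),
      IsOpen U ∧ φ ∈ U ∧ ∀ ψ ∈ U, ψ.1 d = 1) := by
  have hcomm : commutantSet D = (D : Set A) := commutant_eq hab hmax
  have hJ : ∀ φ : characterSpace ℂ ↥D,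
      Jphi D φ = (fun d : ↥D => (d : A)) '' {d : ↥D | φ.1 d = 0} :=
    fun φ => jphi_eq hDc hab hcomm hau φ
  have hloc : ∀ φ : characterSpace ℂ ↥D, ∃ d : ↥D, ∃ U : Set (characterSpace ℂ ↥D),
      IsOpen U ∧ φ ∈ U ∧ ∀ ψ ∈ U, ψ.1 d = 1 := fun φ => exists_local_one hDc φ
  have hunit : ∀ φ : characterSpace ℂ ↥D, ∃ e ∈ commutantSet D, IsUnitMod D e (Jphi D φ) ∧
      ∀ a ∈ commutantSet D, ∃ c : ℂ, a - c • e ∈ Jphi D φ := by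
    intro φ
    obtain ⟨e, he⟩ := char_exists_one φ
    have he' : φ.1 e = 1 := he
    have heC : (e : A) ∈ commutantSet D := by rw [hcomm]; exact e.2
    refine ⟨e, heC, isUnitMod_of_char_one hcomm φ (hJ φ) e he', ?_⟩
    intro a ha
    rw [hcomm] at ha
    refine ⟨φ ⟨a, ha⟩, ?_⟩
    rw [hJ]
    refine ⟨⟨a, ha⟩ - φ ⟨a, ha⟩ • e, ?_, by push_cast; rfl⟩
    show φ (⟨a, ha⟩ - φ ⟨a, ha⟩ • e) = 0
    rw [map_sub, map_smul, he, smul_eq_mul, mul_one, sub_self]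
  refine ⟨⟨hab, hau, ?_, ?_⟩, hcomm, hJ, hunit, hloc⟩
  · intro φ
    obtain ⟨e, h1, h2, _⟩ := hunit φ
    exact ⟨e, h1, h2⟩
  · intro φ
    obtain ⟨d, U, hU, hφU, hone⟩ := hloc φ
    exact ⟨d, U, hU, hφU, fun ψ hψ => isUnitMod_of_char_one hcomm ψ (hJ ψ) d (hone ψ hψ)⟩
end

section
/- Let X be a locally compact Hausdorff space and σ a local homeomorphism from an open subset U of X onto an open subset V of X, and let G(X,σ) be the associated Deaconu–Renault groupoid. Then the collection of all sets Z(A,m,n,B), where m,n ∈ ℕ₀, A ⊆ U_m and B ⊆ U_n are open and σᵐ|_A and σⁿ|_B are homeomorphisms onto their (open) images, is a basis for a topology on G(X,σ): these sets cover G(X,σ), and for any two such sets Z₁, Z₂ and any η ∈ Z₁ ∩ Z₂ there is a set Z₃ of this form with η ∈ Z₃ ⊆ Z₁ ∩ Z₂. Moreover, with respect to the topology generated by these sets, the inversion map (x,k,y) ↦ (y,−k,x) is a homeomorphism of G(X,σ), and the range map r(x,k,y) = x is a local homeomorphism from G(X,σ) onto X. -/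
open Set Function

/-- The domain `Uₙ` of the `n`-th iterate of a local homeomorphism `σ` from an open
set `U ⊆ X` onto an open set `V ⊆ X`: `U₀ = X` and `Uₙ₊₁ = σ⁻¹(Uₙ ∩ V)` (inside `U`). -/
def iterDom {X : Type*} (σ : X → X) (U V : Set X) : ℕ → Set X
  | 0 => Set.univ
  | n + 1 => U ∩ σ ⁻¹' (iterDom σ U V n ∩ V)

/-- `Stab(x) = {m - n : x ∈ U_m ∩ U_n, σᵐ(x) = σⁿ(x)} ⊆ ℤ`. -/
def DRStab {X : Type*} (σ : X → X) (U V : Set X) (x : X) : Set ℤ :=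
  {p | ∃ m n : ℕ, p = (m : ℤ) - (n : ℤ) ∧
    x ∈ iterDom σ U V m ∩ iterDom σ U V n ∧ σ^[m] x = σ^[n] x}

/-- `Stab^ess(x)`: those `m - n` for which `σᵐ = σⁿ` on a neighbourhood of `x`. -/
def DRStabEss {X : Type*} [TopologicalSpace X] (σ : X → X) (U V : Set X) (x : X) : Set ℤ :=
  {p | ∃ m n : ℕ, p = (m : ℤ) - (n : ℤ) ∧
    ∃ O : Set X, IsOpen O ∧ x ∈ O ∧ O ⊆ iterDom σ U V m ∩ iterDom σ U V n ∧
      Set.EqOn (σ^[m]) (σ^[n]) O}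

/-- `Stab_min(x) := min {p ∈ Stab(x) : p ≥ 1}` in `ℕ∞` (`min ∅ = ∞`). -/
noncomputable def DRStabMin {X : Type*} (σ : X → X) (U V : Set X) (x : X) : ℕ∞ :=
  sInf {p : ℕ∞ | ∃ q : ℕ, p = (q : ℕ∞) ∧ 1 ≤ q ∧ (q : ℤ) ∈ DRStab σ U V x}

/-- `Stab^ess_min(x) := min {p ∈ Stab^ess(x) : p ≥ 1}` in `ℕ∞`. -/
noncomputable def DRStabEssMin {X : Type*} [TopologicalSpace X] (σ : X → X) (U V : Set X)
    (x : X) : ℕ∞ :=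
  sInf {p : ℕ∞ | ∃ q : ℕ, p = (q : ℕ∞) ∧ 1 ≤ q ∧ (q : ℤ) ∈ DRStabEss σ U V x}

/-- `(h, l, k, l', k')` is a continuous orbit equivalence from `(X, σ)` to `(Y, τ)`. -/
def DRCOE {X Y : Type*} [TopologicalSpace X] [TopologicalSpace Y]
    (σ : X → X) (Uσ : Set X) (τ : Y → Y) (Uτ : Set Y)
    (h : X ≃ₜ Y) (l k : X → ℕ) (l' k' : Y → ℕ) : Prop :=
  ContinuousOn l Uσ ∧ ContinuousOn k Uσ ∧ ContinuousOn l' Uτ ∧ ContinuousOn k' Uτ ∧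
    (∀ x ∈ Uσ, τ^[l x] (h x) = τ^[k x] (h (σ x))) ∧
    (∀ y ∈ Uτ, σ^[l' y] (h.symm y) = σ^[k' y] (h.symm (τ y)))

/-- The continuous orbit equivalence `(h, l, k, l', k')` preserves stabilisers. -/
def DRPreservesStab {X Y : Type*} [TopologicalSpace X] [TopologicalSpace Y]
    (σ : X → X) (Uσ Vσ : Set X) (τ : Y → Y) (Uτ Vτ : Set Y)
    (h : X ≃ₜ Y) (l k : X → ℕ) (l' k' : Y → ℕ) : Prop :=
  (∀ x : X, DRStabMin σ Uσ Vσ x < ⊤ ↔ DRStabMin τ Uτ Vτ (h x) < ⊤) ∧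
  (∀ (x : X) (p : ℕ), 1 ≤ p → (p : ℕ∞) = DRStabMin σ Uσ Vσ x → σ^[p] x = x →
    (((∑ j ∈ Finset.range p, ((l (σ^[j] x) : ℤ) - (k (σ^[j] x) : ℤ))).natAbs : ℕ∞)
      = DRStabMin τ Uτ Vτ (h x))) ∧
  (∀ (y : Y) (p : ℕ), 1 ≤ p → (p : ℕ∞) = DRStabMin τ Uτ Vτ y → τ^[p] y = y →
    (((∑ j ∈ Finset.range p, ((l' (τ^[j] y) : ℤ) - (k' (τ^[j] y) : ℤ))).natAbs : ℕ∞)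
      = DRStabMin σ Uσ Vσ (h.symm y)))

/-- The continuous orbit equivalence `(h, l, k, l', k')` preserves essential stabilisers. -/
def DRPreservesStabEss {X Y : Type*} [TopologicalSpace X] [TopologicalSpace Y]
    (σ : X → X) (Uσ Vσ : Set X) (τ : Y → Y) (Uτ Vτ : Set Y)
    (h : X ≃ₜ Y) (l k : X → ℕ) (l' k' : Y → ℕ) : Prop :=
  (∀ x : X, DRStabEssMin σ Uσ Vσ x < ⊤ ↔ DRStabEssMin τ Uτ Vτ (h x) < ⊤) ∧
  (∀ (x : X) (p : ℕ), 1 ≤ p → (p : ℕ∞) = DRStabEssMin σ Uσ Vσ x → σ^[p] x = x →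
    (((∑ j ∈ Finset.range p, ((l (σ^[j] x) : ℤ) - (k (σ^[j] x) : ℤ))).natAbs : ℕ∞)
      = DRStabEssMin τ Uτ Vτ (h x))) ∧
  (∀ (y : Y) (p : ℕ), 1 ≤ p → (p : ℕ∞) = DRStabEssMin τ Uτ Vτ y → τ^[p] y = y →
    (((∑ j ∈ Finset.range p, ((l' (τ^[j] y) : ℤ) - (k' (τ^[j] y) : ℤ))).natAbs : ℕ∞)
      = DRStabEssMin σ Uσ Vσ (h.symm y)))

/-- The Deaconu–Renault groupoid `G(X,σ)` as a subset of `X × ℤ × X`. -/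
def DRset {X : Type*} (σ : X → X) (U V : Set X) : Set (X × ℤ × X) :=
  {p | ∃ m n : ℕ, p.2.1 = (m : ℤ) - (n : ℤ) ∧
    p.1 ∈ iterDom σ U V m ∧ p.2.2 ∈ iterDom σ U V n ∧ σ^[m] p.1 = σ^[n] p.2.2}

/-- `f` restricts to a homeomorphism of `A` onto its (open) image. -/
def HomeoOnto {X : Type*} [TopologicalSpace X] (f : X → X) (A : Set X) : Prop :=
  ∃ e : PartialHomeomorph X X, e.source = A ∧ e.target = f '' A ∧ Set.EqOn f e A

/-- The basic sets `Z(A, m, n, B)` of the Deaconu–Renault groupoid. -/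
def DRbasic {X : Type*} [TopologicalSpace X] (σ : X → X) (U V : Set X) :
    Set (Set ↥(DRset σ U V)) :=
  {S | ∃ (m n : ℕ) (A B : Set X), IsOpen A ∧ IsOpen B ∧
    A ⊆ iterDom σ U V m ∧ B ⊆ iterDom σ U V n ∧
    HomeoOnto (σ^[m]) A ∧ HomeoOnto (σ^[n]) B ∧
    S = {g : ↥(DRset σ U V) | g.1.1 ∈ A ∧ g.1.2.2 ∈ B ∧
      g.1.2.1 = (m : ℤ) - (n : ℤ) ∧ σ^[m] g.1.1 = σ^[n] g.1.2.2}}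

/-- The topology on `G(X,σ)` generated by the sets `Z(A,m,n,B)`. -/
def DRtop {X : Type*} [TopologicalSpace X] (σ : X → X) (U V : Set X) :
    TopologicalSpace ↥(DRset σ U V) :=
  TopologicalSpace.generateFrom (DRbasic σ U V)

/-- The inversion map `(x, k, y) ↦ (y, -k, x)` of `G(X,σ)`. -/
def DRinv {X : Type*} (σ : X → X) (U V : Set X) : ↥(DRset σ U V) → ↥(DRset σ U V) :=
  fun g => ⟨(g.1.2.2, -g.1.2.1, g.1.1), by
    obtain ⟨m, n, h1, h2, h3, h4⟩ := g.2
    exact ⟨n, m, by rw [h1]; ring, h3, h2, h4.symm⟩⟩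

section DRAux

open TopologicalSpace

variable {X : Type*} [TopologicalSpace X] {σ : X → X} {U V : Set X}

lemma iterDom_add {m t : ℕ} : ∀ {x : X}, x ∈ iterDom σ U V (m + t) →
    x ∈ iterDom σ U V m ∧ σ^[m] x ∈ iterDom σ U V t := by
  induction m with
  | zero => exact fun hx => ⟨trivial, by simpa using hx⟩
  | succ m ih =>
    intro x hx
    have hx' : x ∈ iterDom σ U V ((m + t) + 1) := by
      rwa [show m + 1 + t = (m + t) + 1 by omega] at hx
    obtain ⟨h1, h2⟩ := hx'
    obtain ⟨h3, h4⟩ := ih h2.1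
    refine ⟨⟨h1, h3, h2.2⟩, ?_⟩
    rw [Function.iterate_succ_apply]
    exact h4

lemma isOpen_iterDom (hσ : IsLocalHomeomorphOn σ U) (hU : IsOpen U) (hV : IsOpen V) :
    ∀ n, IsOpen (iterDom σ U V n)
  | 0 => isOpen_univ
  | (n + 1) => hσ.continuousOn.isOpen_inter_preimage hU
      ((isOpen_iterDom hσ hU hV n).inter hV)

lemma isLocalHomeomorphOn_iterDom (hσ : IsLocalHomeomorphOn σ U) :
    ∀ n, IsLocalHomeomorphOn (σ^[n]) (iterDom σ U V n)
  | 0 => by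
    apply IsLocalHomeomorphOn.mk
    intro x _
    exact ⟨(Homeomorph.refl X).toOpenPartialHomeomorph, trivial, fun y _ => by simp⟩
  | (n + 1) => by
    rw [Function.iterate_succ]
    exact (isLocalHomeomorphOn_iterDom hσ n).comp (hσ.mono fun x hx => hx.1)
      (fun x hx => hx.2.1)

lemma continuousOn_iterDom (hσ : IsLocalHomeomorphOn σ U) (n : ℕ) :
    ContinuousOn (σ^[n]) (iterDom σ U V n) :=
  (isLocalHomeomorphOn_iterDom hσ n).continuousOn

lemma HomeoOnto.injOn {f : X → X} {A : Set X} (h : HomeoOnto f A) : Set.InjOn f A := by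
  obtain ⟨e, hs, _, heq⟩ := h
  intro a ha b hb hab
  exact e.injOn (by rw [hs]; exact ha) (by rw [hs]; exact hb)
    (by rw [← heq ha, ← heq hb]; exact hab)

lemma HomeoOnto.mono {f : X → X} {A A' : Set X} (h : HomeoOnto f A) (hA' : IsOpen A')
    (hsub : A' ⊆ A) : HomeoOnto f A' := by
  obtain ⟨e, hs, ht, heq⟩ := h
  have hsub' : A' ⊆ e.source := hs ▸ hsub
  let e' : PartialHomeomorph X X :=
    { toPartialEquiv := e.toPartialEquiv.restr A'
      continuousOn_toFun := e.continuousOn_toFun.mono inter_subset_left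
      continuousOn_invFun := e.continuousOn_invFun.mono inter_subset_left }
  refine ⟨e',
    by show e.source ∩ A' = A'; rw [hs, inter_eq_right.mpr hsub], ?_, fun p hp => heq (hsub hp)⟩
  have h1 : e'.target = e.target ∩ e.symm ⁻¹' A' := rfl
  rw [h1, ← e.image_source_inter_eq', inter_eq_right.mpr hsub']
  exact ((heq.mono hsub).image_eq).symm

lemma exists_homeoOnto_nhd {f : X → X} {W : Set X} (hf : IsLocalHomeomorphOn f W)
    (hW : IsOpen W) {x : X} (hx : x ∈ W) :
    ∃ A : Set X, x ∈ A ∧ A ⊆ W ∧ IsOpen A ∧ HomeoOnto f A := by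
  obtain ⟨e, hxe, rfl⟩ := hf x hx
  have h0 : HomeoOnto (↑e) e.source :=
    ⟨e.toPartialHomeomorph, rfl, e.image_source_eq_target.symm, fun y _ => rfl⟩
  exact ⟨e.source ∩ W, ⟨hxe, hx⟩, inter_subset_right, e.open_source.inter hW,
    h0.mono (e.open_source.inter hW) inter_subset_left⟩

/-- Bundled data for a basic set `Z(A, m, n, B)`. -/
structure ZData {X : Type*} [TopologicalSpace X] (σ : X → X) (U V : Set X) where
  m : ℕ
  n : ℕ
  A : Set X
  B : Set X
  hA : IsOpen A
  hB : IsOpen B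
  hAU : A ⊆ iterDom σ U V m
  hBU : B ⊆ iterDom σ U V n
  hAh : HomeoOnto (σ^[m]) A
  eB : PartialHomeomorph X X
  heBs : eB.source = B
  heBt : eB.target = σ^[n] '' B
  heBeq : Set.EqOn (σ^[n]) eB B

namespace ZData

variable (d : ZData σ U V)

def Z : Set ↥(DRset σ U V) :=
  {g | g.1.1 ∈ d.A ∧ g.1.2.2 ∈ d.B ∧ g.1.2.1 = (d.m : ℤ) - d.n ∧
    σ^[d.m] g.1.1 = σ^[d.n] g.1.2.2}

lemma hBh : HomeoOnto (σ^[d.n]) d.B := ⟨d.eB, d.heBs, d.heBt, d.heBeq⟩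

lemma Z_mem_basic : d.Z ∈ DRbasic σ U V :=
  ⟨d.m, d.n, d.A, d.B, d.hA, d.hB, d.hAU, d.hBU, d.hAh, d.hBh, rfl⟩

lemma ofBasic {S : Set ↥(DRset σ U V)} (hS : S ∈ DRbasic σ U V) :
    ∃ d : ZData σ U V, d.Z = S := by
  obtain ⟨m, n, A, B, hA, hB, hAU, hBU, hAh, ⟨eB, hs, ht, heq⟩, rfl⟩ := hS
  exact ⟨⟨m, n, A, B, hA, hB, hAU, hBU, hAh, eB, hs, ht, heq⟩, rfl⟩

/-- The image of `Z` under the range map. -/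
def rT : Set X := d.A ∩ σ^[d.m] ⁻¹' d.eB.target

lemma mem_rT_of_mem {g : ↥(DRset σ U V)} (hg : g ∈ d.Z) : g.1.1 ∈ d.rT :=
  ⟨hg.1, by
    rw [mem_preimage, d.heBt, hg.2.2.2]
    exact ⟨_, hg.2.1, rfl⟩⟩

def lift (x : X) (hx : x ∈ d.rT) : ↥(DRset σ U V) :=
  ⟨(x, (d.m : ℤ) - d.n, d.eB.symm (σ^[d.m] x)), by
    have h1 : d.eB.symm (σ^[d.m] x) ∈ d.B := d.heBs ▸ d.eB.map_target hx.2
    refine ⟨d.m, d.n, rfl, d.hAU hx.1, d.hBU h1, ?_⟩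
    show σ^[d.m] x = σ^[d.n] (d.eB.symm (σ^[d.m] x))
    rw [d.heBeq h1, d.eB.right_inv hx.2]⟩

lemma lift_mem {x : X} (hx : x ∈ d.rT) : d.lift x hx ∈ d.Z := by
  have h1 : d.eB.symm (σ^[d.m] x) ∈ d.B := d.heBs ▸ d.eB.map_target hx.2
  refine ⟨hx.1, h1, rfl, ?_⟩
  show σ^[d.m] x = σ^[d.n] (d.eB.symm (σ^[d.m] x))
  rw [d.heBeq h1, d.eB.right_inv hx.2]

lemma lift_fst {x : X} (hx : x ∈ d.rT) : (d.lift x hx).1.1 = x := rfl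

lemma injOn_r : Set.InjOn (fun g : ↥(DRset σ U V) => g.1.1) d.Z := by
  intro g₁ h₁ g₂ h₂ hx
  have hx' : g₁.1.1 = g₂.1.1 := hx
  have hy : g₁.1.2.2 = g₂.1.2.2 :=
    d.hBh.injOn h₁.2.1 h₂.2.1 (by rw [← h₁.2.2.2, ← h₂.2.2.2, hx'])
  apply Subtype.ext
  refine Prod.ext_iff.mpr ⟨hx', Prod.ext_iff.mpr ⟨?_, hy⟩⟩
  rw [h₁.2.2.1, h₂.2.2.1]

lemma isOpen_rT (hσ : IsLocalHomeomorphOn σ U) (hU : IsOpen U) (hV : IsOpen V) :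
    IsOpen d.rT := by
  have hT : IsOpen d.eB.target := by
    rw [d.heBt, isOpen_iff_forall_mem_open]
    rintro _ ⟨b, hb, rfl⟩
    obtain ⟨e, hbe, he⟩ := isLocalHomeomorphOn_iterDom (V := V) hσ d.n b (d.hBU hb)
    refine ⟨e '' (e.source ∩ d.B), ?_, e.isOpen_image_source_inter d.hB, ⟨b, ⟨hbe, hb⟩, by rw [he]⟩⟩
    rintro _ ⟨c, hc, rfl⟩
    exact ⟨c, hc.2, by rw [he]⟩
  have h2 : IsOpen (iterDom σ U V d.m ∩ σ^[d.m] ⁻¹' d.eB.target) :=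
    (continuousOn_iterDom hσ d.m).isOpen_inter_preimage (isOpen_iterDom hσ hU hV d.m)
      hT
  have h3 : d.rT = d.A ∩ (iterDom σ U V d.m ∩ σ^[d.m] ⁻¹' d.eB.target) := by
    rw [rT, ← inter_assoc, inter_eq_left.mpr d.hAU]
  rw [h3]
  exact d.hA.inter h2

end ZData

lemma exists_zdata (hσ : IsLocalHomeomorphOn σ U) (hU : IsOpen U) (hV : IsOpen V)
    (g : ↥(DRset σ U V)) {W : Set X} (hW : IsOpen W) (hgW : g.1.1 ∈ W) :
    ∃ d : ZData σ U V, g ∈ d.Z ∧ d.A ⊆ W := by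
  obtain ⟨m, n, hk, hm, hn, heq⟩ := g.2
  obtain ⟨A, hxA, hAU, hAo, hAh⟩ :=
    exists_homeoOnto_nhd (isLocalHomeomorphOn_iterDom hσ m) (isOpen_iterDom hσ hU hV m) hm
  obtain ⟨B, hyB, hBU, hBo, hBh⟩ :=
    exists_homeoOnto_nhd (isLocalHomeomorphOn_iterDom hσ n) (isOpen_iterDom hσ hU hV n) hn
  obtain ⟨eB, hs, ht, heqB⟩ := hBh
  exact ⟨⟨m, n, A ∩ W, B, hAo.inter hW, hBo, inter_subset_left.trans hAU, hBU,
    hAh.mono (hAo.inter hW) inter_subset_left, eB, hs, ht, heqB⟩,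
    ⟨⟨hxA, hgW⟩, hyB, hk, heq⟩, inter_subset_right⟩

lemma DRrefine_aux (hσ : IsLocalHomeomorphOn σ U) (hU : IsOpen U) (hV : IsOpen V)
    (d₁ d₂ : ZData σ U V) (hle : d₁.m ≤ d₂.m) {g : ↥(DRset σ U V)}
    (hg₁ : g ∈ d₁.Z) (hg₂ : g ∈ d₂.Z) :
    ∃ d₃ : ZData σ U V, g ∈ d₃.Z ∧ d₃.Z ⊆ d₁.Z ∧ d₃.Z ⊆ d₂.Z := by
  obtain ⟨t, ht⟩ : ∃ t, d₂.m = d₁.m + t := ⟨d₂.m - d₁.m, by omega⟩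
  have hkk : (d₁.m : ℤ) - d₁.n = (d₂.m : ℤ) - d₂.n := hg₁.2.2.1.symm.trans hg₂.2.2.1
  have hn : d₂.n = d₁.n + t := by omega
  have hxU : g.1.1 ∈ iterDom σ U V (d₁.m + t) := ht ▸ d₂.hAU hg₂.1
  have hz : σ^[d₁.m] g.1.1 ∈ iterDom σ U V t := (iterDom_add hxU).2
  obtain ⟨C, hzC, hCU, hCo, hCh⟩ :=
    exists_homeoOnto_nhd (isLocalHomeomorphOn_iterDom hσ t) (isOpen_iterDom hσ hU hV t) hz
  have hinjC := hCh.injOn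
  set A₃ := d₁.A ∩ d₂.A ∩ (iterDom σ U V d₁.m ∩ σ^[d₁.m] ⁻¹' C) with hA₃def
  have hA₃o : IsOpen A₃ := (d₁.hA.inter d₂.hA).inter
    ((continuousOn_iterDom hσ d₁.m).isOpen_inter_preimage (isOpen_iterDom hσ hU hV d₁.m) hCo)
  set B₃ := d₁.B ∩ d₂.B ∩ (iterDom σ U V d₁.n ∩ σ^[d₁.n] ⁻¹' C) with hB₃def
  have hB₃o : IsOpen B₃ := (d₁.hB.inter d₂.hB).inter
    ((continuousOn_iterDom hσ d₁.n).isOpen_inter_preimage (isOpen_iterDom hσ hU hV d₁.n) hCo)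
  have hA₃2 : A₃ ⊆ d₂.A := fun p hp => hp.1.2
  have hB₃2 : B₃ ⊆ d₂.B := fun p hp => hp.1.2
  obtain ⟨eB₃, hs₃, ht₃, heq₃⟩ := d₂.hBh.mono hB₃o hB₃2
  refine ⟨⟨d₂.m, d₂.n, A₃, B₃, hA₃o, hB₃o, hA₃2.trans d₂.hAU, hB₃2.trans d₂.hBU,
    d₂.hAh.mono hA₃o hA₃2, eB₃, hs₃, ht₃, heq₃⟩, ?_, ?_, ?_⟩
  · exact ⟨⟨⟨hg₁.1, hg₂.1⟩, (iterDom_add hxU).1, hzC⟩,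
      ⟨⟨hg₁.2.1, hg₂.2.1⟩, d₁.hBU hg₁.2.1, by
        rw [mem_preimage, ← hg₁.2.2.2]; exact hzC⟩,
      hg₂.2.2.1, hg₂.2.2.2⟩
  · rintro h ⟨hxA, hyB, hk, he⟩
    have hk' : h.1.2.1 = (d₂.m : ℤ) - d₂.n := hk
    have he' : σ^[d₂.m] h.1.1 = σ^[d₂.n] h.1.2.2 := he
    refine ⟨hxA.1.1, hyB.1.1, by omega, ?_⟩
    apply hinjC hxA.2.2 hyB.2.2
    rw [← Function.iterate_add_apply, ← Function.iterate_add_apply,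
      show t + d₁.m = d₂.m by omega, show t + d₁.n = d₂.n by omega]
    exact he'
  · rintro h ⟨hxA, hyB, hk, he⟩
    exact ⟨hxA.1.2, hyB.1.2, hk, he⟩

lemma DRrefine (hσ : IsLocalHomeomorphOn σ U) (hU : IsOpen U) (hV : IsOpen V) :
    ∀ S₁ ∈ DRbasic σ U V, ∀ S₂ ∈ DRbasic σ U V, ∀ g ∈ S₁ ∩ S₂,
      ∃ d₃ : ZData σ U V, g ∈ d₃.Z ∧ d₃.Z ⊆ S₁ ∩ S₂ := by
  intro S₁ h₁ S₂ h₂ g hg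
  obtain ⟨d₁, rfl⟩ := ZData.ofBasic h₁
  obtain ⟨d₂, rfl⟩ := ZData.ofBasic h₂
  rcases le_total d₁.m d₂.m with h | h
  · obtain ⟨d₃, a, b, c⟩ := DRrefine_aux hσ hU hV d₁ d₂ h hg.1 hg.2
    exact ⟨d₃, a, subset_inter b c⟩
  · obtain ⟨d₃, a, b, c⟩ := DRrefine_aux hσ hU hV d₂ d₁ h hg.2 hg.1
    exact ⟨d₃, a, subset_inter c b⟩

lemma drBasis (hσ : IsLocalHomeomorphOn σ U) (hU : IsOpen U) (hV : IsOpen V) :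
    @TopologicalSpace.IsTopologicalBasis ↥(DRset σ U V) (DRtop σ U V) (DRbasic σ U V) := by
  letI := DRtop σ U V
  refine ⟨?_, ?_, rfl⟩
  · intro S₁ h₁ S₂ h₂ g hg
    obtain ⟨d₃, a, b⟩ := DRrefine hσ hU hV S₁ h₁ S₂ h₂ g hg
    exact ⟨d₃.Z, d₃.Z_mem_basic, a, b⟩
  · rw [sUnion_eq_univ_iff]
    intro g
    obtain ⟨d, hg, -⟩ := exists_zdata hσ hU hV g isOpen_univ trivial
    exact ⟨d.Z, d.Z_mem_basic, hg⟩

lemma r_continuous (hσ : IsLocalHomeomorphOn σ U) (hU : IsOpen U) (hV : IsOpen V) :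
    @Continuous _ _ (DRtop σ U V) _ (fun g : ↥(DRset σ U V) => g.1.1) := by
  letI := DRtop σ U V
  rw [continuous_def]
  intro W hW
  rw [(drBasis hσ hU hV).isOpen_iff]
  intro g hg
  exact let ⟨d, hgZ, hAW⟩ := exists_zdata hσ hU hV g hW hg
    ⟨d.Z, d.Z_mem_basic, hgZ, fun h hh => hAW hh.1⟩

open Classical in
noncomputable def ZData.liftTotal (d : ZData σ U V) (g₀ : ↥(DRset σ U V)) (x : X) :
    ↥(DRset σ U V) :=
  if hx : x ∈ d.rT then d.lift x hx else g₀

lemma ZData.liftTotal_mem (d : ZData σ U V) (g₀ : ↥(DRset σ U V)) {x : X} (hx : x ∈ d.rT) :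
    d.liftTotal g₀ x ∈ d.Z := by
  unfold ZData.liftTotal
  rw [dif_pos hx]
  exact d.lift_mem hx

lemma ZData.liftTotal_fst (d : ZData σ U V) (g₀ : ↥(DRset σ U V)) {x : X} (hx : x ∈ d.rT) :
    (d.liftTotal g₀ x).1.1 = x := by
  unfold ZData.liftTotal
  rw [dif_pos hx]
  exact d.lift_fst hx

lemma ZData.liftTotal_eq (d : ZData σ U V) (g₀ : ↥(DRset σ U V)) {x : X} (hx : x ∈ d.rT)
    {h : ↥(DRset σ U V)} (hh : h ∈ d.Z) (hfst : h.1.1 = x) : d.liftTotal g₀ x = h :=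
  d.injOn_r (d.liftTotal_mem g₀ hx) hh (by
    show (d.liftTotal g₀ x).1.1 = h.1.1
    rw [d.liftTotal_fst g₀ hx, hfst])

lemma ZData.continuousOn_liftTotal (hσ : IsLocalHomeomorphOn σ U) (hU : IsOpen U)
    (hV : IsOpen V) (d : ZData σ U V) (g₀ : ↥(DRset σ U V)) :
    @ContinuousOn X ↥(DRset σ U V) _ (DRtop σ U V) (d.liftTotal g₀) d.rT := by
  letI := DRtop σ U V
  rw [continuousOn_iff]
  intro x hx t ht hxt
  obtain ⟨S', hS'b, hxS', hS't⟩ := (drBasis hσ hU hV).exists_subset_of_mem_open hxt ht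
  obtain ⟨d₃, h3mem, h3sub⟩ := DRrefine hσ hU hV d.Z d.Z_mem_basic S' hS'b
    (d.liftTotal g₀ x) ⟨d.liftTotal_mem g₀ hx, hxS'⟩
  have hx3 : x ∈ d₃.rT := by
    have := d₃.mem_rT_of_mem h3mem
    rwa [d.liftTotal_fst g₀ hx] at this
  refine ⟨d₃.rT, d₃.isOpen_rT hσ hU hV, hx3, ?_⟩
  rintro x' ⟨hx'3, hx'T⟩
  have h1 : d₃.lift x' hx'3 ∈ d₃.Z := d₃.lift_mem hx'3
  have h2 : d.liftTotal g₀ x' = d₃.lift x' hx'3 :=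
    d.liftTotal_eq g₀ hx'T (h3sub h1).1 rfl
  rw [mem_preimage, h2]
  exact hS't (h3sub h1).2

lemma DRinv_inv (g : ↥(DRset σ U V)) : DRinv σ U V (DRinv σ U V g) = g := by
  obtain ⟨⟨x, k, y⟩, hg⟩ := g
  apply Subtype.ext
  show (x, - -k, y) = (x, k, y)
  rw [neg_neg]

lemma DRinv_continuous (hσ : IsLocalHomeomorphOn σ U) (hU : IsOpen U) (hV : IsOpen V) :
    @Continuous _ _ (DRtop σ U V) (DRtop σ U V) (DRinv σ U V) := by
  apply continuous_generateFrom_iff.mpr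
  intro S hS
  obtain ⟨m, n, A, B, hA, hB, hAU, hBU, hAh, hBh, rfl⟩ := hS
  have hpre : DRinv σ U V ⁻¹' {g : ↥(DRset σ U V) | g.1.1 ∈ A ∧ g.1.2.2 ∈ B ∧
      g.1.2.1 = (m : ℤ) - n ∧ σ^[m] g.1.1 = σ^[n] g.1.2.2} =
      {g : ↥(DRset σ U V) | g.1.1 ∈ B ∧ g.1.2.2 ∈ A ∧
      g.1.2.1 = (n : ℤ) - m ∧ σ^[n] g.1.1 = σ^[m] g.1.2.2} := by
    ext g
    simp only [mem_preimage, mem_setOf_eq, DRinv]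
    constructor
    · rintro ⟨h1, h2, h3, h4⟩
      exact ⟨h2, h1, by omega, h4.symm⟩
    · rintro ⟨h1, h2, h3, h4⟩
      exact ⟨h2, h1, by omega, h4.symm⟩
  rw [hpre]
  exact TopologicalSpace.isOpen_generateFrom_of_mem
    ⟨n, m, B, A, hB, hA, hBU, hAU, hBh, hAh, rfl⟩

end DRAux

theorem stmt18 {X : Type*} [TopologicalSpace X] [LocallyCompactSpace X] [T2Space X]
    (σ : X → X) (U V : Set X)
    (hU : IsOpen U) (hV : IsOpen V) (hσ : IsLocalHomeomorphOn σ U) (hσV : σ '' U = V) :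
    -- the sets Z(A,m,n,B) cover G(X,σ)
    (∀ g : ↥(DRset σ U V), ∃ S ∈ DRbasic σ U V, g ∈ S) ∧
    -- and are closed under refinement at points of intersections
    (∀ S₁ ∈ DRbasic σ U V, ∀ S₂ ∈ DRbasic σ U V, ∀ g ∈ S₁ ∩ S₂,
      ∃ S₃ ∈ DRbasic σ U V, g ∈ S₃ ∧ S₃ ⊆ S₁ ∩ S₂) ∧
    -- inversion is a homeomorphism for the generated topology
    (∃ e : @Homeomorph ↥(DRset σ U V) ↥(DRset σ U V) (DRtop σ U V) (DRtop σ U V),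
      ∀ g, (@Homeomorph.toEquiv _ _ (DRtop σ U V) (DRtop σ U V) e) g = DRinv σ U V g) ∧
    -- the range map is a local homeomorphism onto X
    Function.Surjective (fun g : ↥(DRset σ U V) => g.1.1) ∧
    @IsLocalHomeomorph ↥(DRset σ U V) X (DRtop σ U V) _ (fun g => g.1.1) := by
  refine ⟨?_, ?_, ?_, ?_, ?_⟩
  · intro g
    obtain ⟨d, hg, -⟩ := exists_zdata hσ hU hV g isOpen_univ trivial
    exact ⟨d.Z, d.Z_mem_basic, hg⟩
  · intro S₁ h₁ S₂ h₂ g hg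
    obtain ⟨d₃, a, b⟩ := DRrefine hσ hU hV S₁ h₁ S₂ h₂ g hg
    exact ⟨d₃.Z, d₃.Z_mem_basic, a, b⟩
  · exact ⟨@Homeomorph.mk _ _ (DRtop σ U V) (DRtop σ U V)
      ⟨DRinv σ U V, DRinv σ U V, DRinv_inv, DRinv_inv⟩
      (DRinv_continuous hσ hU hV) (DRinv_continuous hσ hU hV), fun g => rfl⟩
  · intro x
    exact ⟨⟨(x, 0, x), 0, 0, by simp, trivial, trivial, rfl⟩, rfl⟩
  · intro g
    obtain ⟨d, hgZ, -⟩ := exists_zdata hσ hU hV g isOpen_univ trivial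
    letI := DRtop σ U V
    refine ⟨{ toFun := fun h : ↥(DRset σ U V) => h.1.1
              invFun := d.liftTotal g
              source := d.Z
              target := d.rT
              map_source' := fun h hh => d.mem_rT_of_mem hh
              map_target' := fun x hx => d.liftTotal_mem g hx
              left_inv' := fun h hh => d.liftTotal_eq g (d.mem_rT_of_mem hh) hh rfl
              right_inv' := fun x hx => d.liftTotal_fst g hx
              open_source := (drBasis hσ hU hV).isOpen d.Z_mem_basic
              open_target := d.isOpen_rT hσ hU hV
              continuousOn_toFun := (r_continuous hσ hU hV).continuousOn
              continuousOn_invFun := d.continuousOn_liftTotal hσ hU hV g }, hgZ, rfl⟩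
end
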